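/- Every inner-distal homeomorphism of the circle S¹ is distal. -/

import Mathlib

open Metric Set MeasureTheory Filter Topology

/-- The proximal cell of `x` with respect to the iterates `f ^ n`, `n : ℤ`. -/
noncomputable def proximalCell {X : Type*} [MetricSpace X] (f : Equiv.Perm X) (x : X) : Set X :=
  {y | (⨅ n : ℤ, dist ((f ^ n) x) ((f ^ n) y)) = 0}


lemma coe_eq_coe' {u v : ℝ} : (↑u : AddCircle (1:ℝ)) = ↑v ↔ ∃ k : ℤ, v - u = k := by
  rw [QuotientAddGroup.eq_iff_sub_mem, AddSubgroup.mem_zmultiples_iff]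
  constructor
  · rintro ⟨k, hk⟩
    refine ⟨-k, ?_⟩
    have : (k : ℝ) * 1 = u - v := by rw [← zsmul_eq_mul]; exact_mod_cast hk
    push_cast
    linarith
  · rintro ⟨k, hk⟩
    refine ⟨-k, ?_⟩
    have : ((-k : ℤ) : ℝ) * 1 = u - v := by push_cast; linarith
    rw [← zsmul_eq_mul] at this
    exact this

lemma cont_zpow (f : AddCircle (1:ℝ) ≃ₜ AddCircle (1:ℝ)) (n : ℤ) :
    Continuous ⇑(f.toEquiv ^ n) := by
  induction n using Int.induction_on with
  | zero => simpa using continuous_id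
  | succ n ih =>
      rw [zpow_add_one, Equiv.Perm.coe_mul]
      exact ih.comp f.continuous
  | pred n ih =>
      rw [zpow_sub_one, Equiv.Perm.coe_mul]
      exact ih.comp f.symm.continuous

lemma isOpenMap_coe1 : IsOpenMap ((↑) : ℝ → AddCircle (1:ℝ)) :=
  QuotientAddGroup.isOpenMap_coe

lemma lift_Ico (a : ℝ) (z : AddCircle (1:ℝ)) : ∃ t ∈ Ico a (a + 1), (↑t : AddCircle (1:ℝ)) = z := by
  haveI : Fact ((0:ℝ) < 1) := ⟨zero_lt_one⟩
  have : z ∈ ((↑) : ℝ → AddCircle (1:ℝ)) '' Ico a (a + 1) := by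
    rw [AddCircle.coe_image_Ico_eq]; trivial
  obtain ⟨t, ht, hz⟩ := this
  exact ⟨t, ht, hz⟩

lemma sep {r1 r2 r3 r4 : ℝ} (h12 : r1 < r2) (h23 : r2 < r3) (h34 : r3 < r4) (h41 : r4 < r1 + 1)
    {C : Set (AddCircle (1:ℝ))} (hC : IsPreconnected C)
    (h1 : (↑r1 : AddCircle (1:ℝ)) ∈ C) (h3 : (↑r3 : AddCircle (1:ℝ)) ∈ C)
    (h2 : (↑r2 : AddCircle (1:ℝ)) ∉ C) (h4 : (↑r4 : AddCircle (1:ℝ)) ∉ C) : False := by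
  set U : Set (AddCircle (1:ℝ)) := ((↑) : ℝ → AddCircle (1:ℝ)) '' Ioo r2 r4 with hU
  set V : Set (AddCircle (1:ℝ)) := ((↑) : ℝ → AddCircle (1:ℝ)) '' Ioo r4 (r2 + 1) with hV
  have hUo : IsOpen U := isOpenMap_coe1 _ isOpen_Ioo
  have hVo : IsOpen V := isOpenMap_coe1 _ isOpen_Ioo
  have hcover : C ⊆ U ∪ V := by
    intro z hz
    obtain ⟨t, ht, rfl⟩ := lift_Ico r2 z
    have ht2 : t ≠ r2 := by rintro rfl; exact h2 hz
    have ht4 : t ≠ r4 := by rintro rfl; exact h4 hz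
    rcases lt_or_gt_of_ne ht4 with h | h
    · exact Or.inl ⟨t, ⟨lt_of_le_of_ne ht.1 (Ne.symm ht2), h⟩, rfl⟩
    · exact Or.inr ⟨t, ⟨h, ht.2⟩, rfl⟩
  have hCU : (C ∩ U).Nonempty := ⟨↑r3, h3, ⟨r3, ⟨h23, h34⟩, rfl⟩⟩
  have hr1 : (↑(r1 + 1) : AddCircle (1:ℝ)) = ↑r1 := (coe_eq_coe'.mpr ⟨1, by ring⟩).symm
  have hCV : (C ∩ V).Nonempty := ⟨↑r1, h1, ⟨r1 + 1, ⟨h41, by linarith⟩, hr1⟩⟩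
  obtain ⟨z, _, ⟨t1, ht1, rfl⟩, ⟨t2, ht2, he⟩⟩ := hC U V hUo hVo hcover hCU hCV
  obtain ⟨k, hk⟩ := coe_eq_coe'.mp he.symm
  have hk1 : (0:ℝ) < k := by rw [← hk]; linarith [ht1.2, ht2.1]
  have hk2 : (k:ℝ) < 1 := by rw [← hk]; linarith [ht1.1, ht2.2]
  have : (0:ℤ) < k := by exact_mod_cast hk1
  have : k < (1:ℤ) := by exact_mod_cast hk2
  omega

lemma norm_coe_small {r : ℝ} (h : |r| < 1/2) : ‖(r : AddCircle (1:ℝ))‖ = |r| := by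
  rw [AddCircle.norm_eq]
  have h1 := abs_lt.mp h
  have : round ((1:ℝ)⁻¹ * r) = 0 := by
    rw [round_eq_zero_iff]
    constructor <;> simp <;> linarith [h1.1, h1.2]
  rw [this]
  simp

lemma ne_coe_of_Ioo {c e t : ℝ} (hce : c < e) (he1 : e < c + 1) (ht : t ∈ Ioo e (c+1)) :
    (↑t : AddCircle (1:ℝ)) ≠ ↑c ∧ (↑t : AddCircle (1:ℝ)) ≠ ↑e := by
  constructor
  · intro hh
    obtain ⟨k, hk⟩ := coe_eq_coe'.mp hh
    have : (-1:ℝ) < k := by rw [← hk]; linarith [ht.2]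
    have h2 : (k:ℝ) < 0 := by rw [← hk]; linarith [ht.1]
    have : (-1:ℤ) < k := by exact_mod_cast this
    have : k < (0:ℤ) := by exact_mod_cast h2
    omega
  · intro hh
    obtain ⟨k, hk⟩ := coe_eq_coe'.mp hh
    have : (-1:ℝ) < k := by rw [← hk]; linarith [ht.2]
    have h2 : (k:ℝ) < 0 := by rw [← hk]; linarith [ht.1]
    have : (-1:ℤ) < k := by exact_mod_cast this
    have : k < (0:ℤ) := by exact_mod_cast h2
    omega

lemma dichotomy {c e : ℝ} (hce : c < e) (he1 : e < c + 1)
    {A B : Set (AddCircle (1:ℝ))} (hA : IsPreconnected A) (hB : IsPreconnected B)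
    (hAB : A ∩ B ⊆ {(↑c : AddCircle (1:ℝ)), ↑e})
    (hcA : (↑c : AddCircle (1:ℝ)) ∈ A) (hcB : (↑c : AddCircle (1:ℝ)) ∈ B)
    (heA : (↑e : AddCircle (1:ℝ)) ∈ A) (heB : (↑e : AddCircle (1:ℝ)) ∈ B) :
    A ⊆ ((↑) : ℝ → AddCircle (1:ℝ)) '' Icc c e ∨ B ⊆ ((↑) : ℝ → AddCircle (1:ℝ)) '' Icc c e := by
  by_contra hcon
  push_neg at hcon
  obtain ⟨hA', hB'⟩ := hcon
  rw [Set.not_subset] at hA' hB'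
  obtain ⟨zA, hzA, hzAS⟩ := hA'
  obtain ⟨zB, hzB, hzBS⟩ := hB'
  -- lift zA
  obtain ⟨s, hs, rfl⟩ := lift_Ico c zA
  have hsIoo : s ∈ Ioo e (c + 1) := by
    rcases le_or_gt s e with h | h
    · exact absurd ⟨s, ⟨hs.1, h⟩, rfl⟩ hzAS
    · exact ⟨h, hs.2⟩
  obtain ⟨t, ht, rfl⟩ := lift_Ico c zB
  have htIoo : t ∈ Ioo e (c + 1) := by
    rcases le_or_gt t e with h | h
    · exact absurd ⟨t, ⟨ht.1, h⟩, rfl⟩ hzBS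
    · exact ⟨h, ht.2⟩
  -- ↑t ∉ A, ↑s ∉ B
  have htA : (↑t : AddCircle (1:ℝ)) ∉ A := by
    intro hh
    rcases hAB ⟨hh, hzB⟩ with h | h
    · exact (ne_coe_of_Ioo hce he1 htIoo).1 h
    · exact (ne_coe_of_Ioo hce he1 htIoo).2 h
  have hsB : (↑s : AddCircle (1:ℝ)) ∉ B := by
    intro hh
    rcases hAB ⟨hzA, hh⟩ with h | h
    · exact (ne_coe_of_Ioo hce he1 hsIoo).1 h
    · exact (ne_coe_of_Ioo hce he1 hsIoo).2 h
  -- interior of small arc in A and in B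
  have hintA : ∀ u ∈ Ioo c e, (↑u : AddCircle (1:ℝ)) ∈ A := by
    intro u hu
    by_contra hna
    exact sep hu.1 hu.2 htIoo.1 htIoo.2 hA hcA heA hna htA
  have hintB : ∀ u ∈ Ioo c e, (↑u : AddCircle (1:ℝ)) ∈ B := by
    intro u hu
    by_contra hnb
    exact sep hu.1 hu.2 hsIoo.1 hsIoo.2 hB hcB heB hnb hsB
  -- midpoint contradiction
  set m := (c + e) / 2 with hm
  have hmIoo : m ∈ Ioo c e := ⟨by simp [hm]; linarith, by simp [hm]; linarith⟩
  have := hAB ⟨hintA m hmIoo, hintB m hmIoo⟩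
  rcases this with h | h
  · obtain ⟨k, hk⟩ := coe_eq_coe'.mp h
    have h1 : (k:ℝ) < 0 := by rw [← hk]; simp [hm]; linarith
    have h2 : (-1:ℝ) < k := by rw [← hk]; simp [hm]; linarith
    have : k < (0:ℤ) := by exact_mod_cast h1
    have : (-1:ℤ) < k := by exact_mod_cast h2
    omega
  · obtain ⟨k, hk⟩ := coe_eq_coe'.mp h
    have h1 : (0:ℝ) < k := by rw [← hk]; simp [hm]; linarith
    have h2 : (k:ℝ) < 1 := by rw [← hk]; simp [hm]; linarith
    have : (0:ℤ) < k := by exact_mod_cast h1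
    have : k < (1:ℤ) := by exact_mod_cast h2
    omega

/-- Every inner-distal homeomorphism of the circle is distal. -/
theorem stmt7 (f : AddCircle (1:ℝ) ≃ₜ AddCircle (1:ℝ))
    (hf : ∀ x : AddCircle (1:ℝ), interior (proximalCell f.toEquiv x) = ∅) :
    ∀ x : AddCircle (1:ℝ), proximalCell f.toEquiv x = {x} := by
  intro x
  ext y
  simp only [Set.mem_singleton_iff]
  constructor
  · intro hy
    have hy0 : (⨅ n : ℤ, dist ((f.toEquiv ^ n) x) ((f.toEquiv ^ n) y)) = 0 := hy
    by_contra hxy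
    -- small distances exist
    have hsmall : ∀ ε > (0:ℝ), ∃ n : ℤ,
        dist ((f.toEquiv ^ n) x) ((f.toEquiv ^ n) y) < ε := by
      intro ε hε
      exact exists_lt_of_ciInf_lt (by rw [hy0]; exact hε)
    -- lifts of x and y
    obtain ⟨a, -, ha⟩ := lift_Ico 0 x
    obtain ⟨b, hb, hby⟩ := lift_Ico a y
    have hab : a < b := by
      rcases lt_or_eq_of_le hb.1 with h | h
      · exact h
      · exact absurd (by rw [← hby, ← h, ha]) (Ne.symm hxy)
    have hb1 : b < a + 1 := hb.2
    -- the two arcs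
    set A : Set (AddCircle (1:ℝ)) := ((↑) : ℝ → AddCircle (1:ℝ)) '' Icc a b with hAdef
    set B : Set (AddCircle (1:ℝ)) := ((↑) : ℝ → AddCircle (1:ℝ)) '' Icc b (a+1) with hBdef
    have hxA : x ∈ A := ⟨a, ⟨le_refl a, hab.le⟩, ha⟩
    have hyA : y ∈ A := ⟨b, ⟨hab.le, le_refl b⟩, hby⟩
    have hyB : y ∈ B := ⟨b, ⟨le_refl b, hb1.le⟩, hby⟩
    have ha1x : (↑(a+1) : AddCircle (1:ℝ)) = x := by
      rw [← ha]; exact (coe_eq_coe'.mpr ⟨1, by ring⟩).symm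
    have hxB : x ∈ B := ⟨a+1, ⟨hb1.le, le_refl _⟩, ha1x⟩
    have hApre : IsPreconnected A := isPreconnected_Icc.image _
      (AddCircle.continuous_mk' 1).continuousOn
    have hBpre : IsPreconnected B := isPreconnected_Icc.image _
      (AddCircle.continuous_mk' 1).continuousOn
    have hABsub : A ∩ B ⊆ {x, y} := by
      rintro z ⟨⟨t, ht, rfl⟩, ⟨t', ht', he⟩⟩
      obtain ⟨k, hk⟩ := coe_eq_coe'.mp he.symm
      have hk0 : (0:ℝ) ≤ k := by rw [← hk]; linarith [ht.2, ht'.1]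
      have hk1 : (k:ℝ) ≤ 1 := by rw [← hk]; linarith [ht.1, ht'.2]
      have hk0' : (0:ℤ) ≤ k := by exact_mod_cast hk0
      have hk1' : k ≤ (1:ℤ) := by exact_mod_cast hk1
      interval_cases k
      · -- t = t', so t = b
        have htt : t = t' := by push_cast at hk; linarith
        have : t = b := le_antisymm ht.2 (htt ▸ ht'.1)
        exact Or.inr (by rw [mem_singleton_iff, this]; exact hby)
      · -- t = a
        have : t = a := by
          have := ht'.2
          push_cast at hk
          linarith [ht.1]
        exact Or.inl (by rw [this, ha])
    -- nonempty interiors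
    have hintA : (interior A).Nonempty := by
      refine ⟨↑((a+b)/2), ?_⟩
      have hopen : IsOpen (((↑) : ℝ → AddCircle (1:ℝ)) '' Ioo a b) :=
        QuotientAddGroup.isOpenMap_coe _ isOpen_Ioo
      have hsub : ((↑) : ℝ → AddCircle (1:ℝ)) '' Ioo a b ⊆ A :=
        Set.image_mono Ioo_subset_Icc_self
      exact interior_maximal hsub hopen ⟨(a+b)/2, ⟨by linarith, by linarith⟩, rfl⟩
    have hintB : (interior B).Nonempty := by
      refine ⟨↑((b+(a+1))/2), ?_⟩
      have hopen : IsOpen (((↑) : ℝ → AddCircle (1:ℝ)) '' Ioo b (a+1)) :=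
        QuotientAddGroup.isOpenMap_coe _ isOpen_Ioo
      have hsub : ((↑) : ℝ → AddCircle (1:ℝ)) '' Ioo b (a+1) ⊆ B :=
        Set.image_mono Ioo_subset_Icc_self
      exact interior_maximal hsub hopen ⟨(b+(a+1))/2, ⟨by linarith, by linarith⟩, rfl⟩
    -- final contradiction machine
    have hfinal : ∀ C : Set (AddCircle (1:ℝ)), x ∈ C → (interior C).Nonempty →
        (∀ ε > (0:ℝ), ∃ n : ℤ, ∀ u ∈ C, ∀ v ∈ C,
          dist ((f.toEquiv ^ n) u) ((f.toEquiv ^ n) v) ≤ ε) → False := by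
      rintro C hxC ⟨z, hz⟩ hPC
      have hsub : C ⊆ proximalCell f.toEquiv x := by
        intro u hu
        show (⨅ n : ℤ, dist ((f.toEquiv ^ n) x) ((f.toEquiv ^ n) u)) = 0
        have hbdd : BddBelow (Set.range fun n : ℤ =>
            dist ((f.toEquiv ^ n) x) ((f.toEquiv ^ n) u)) := by
          refine ⟨0, ?_⟩
          rintro r ⟨m, rfl⟩
          exact dist_nonneg
        have hle : ∀ ε > (0:ℝ),
            (⨅ n : ℤ, dist ((f.toEquiv ^ n) x) ((f.toEquiv ^ n) u)) ≤ ε := by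
          intro ε hε
          obtain ⟨n, hn⟩ := hPC ε hε
          exact le_trans (ciInf_le hbdd n) (hn x hxC u hu)
        have h0 : (⨅ n : ℤ, dist ((f.toEquiv ^ n) x) ((f.toEquiv ^ n) u)) ≤ 0 := by
          by_contra hpos
          push_neg at hpos
          have := hle _ (half_pos hpos)
          linarith
        exact le_antisymm h0 (le_ciInf fun n => dist_nonneg)
      have hzin : z ∈ interior (proximalCell f.toEquiv x) := interior_mono hsub hz
      rw [hf x] at hzin
      exact hzin
    -- the dichotomy: one of the arcs is uniformly contracted along a subsequence
    have key : (∀ ε > (0:ℝ), ∃ n : ℤ, ∀ u ∈ A, ∀ v ∈ A,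
          dist ((f.toEquiv ^ n) u) ((f.toEquiv ^ n) v) ≤ ε) ∨
        (∀ ε > (0:ℝ), ∃ n : ℤ, ∀ u ∈ B, ∀ v ∈ B,
          dist ((f.toEquiv ^ n) u) ((f.toEquiv ^ n) v) ≤ ε) := by
      by_contra hccc
      push_neg at hccc
      obtain ⟨⟨εA, hεA, hnA⟩, ⟨εB, hεB, hnB⟩⟩ := hccc
      set ε := min (min εA εB) (1/4) with hεdef
      have hεpos : (0:ℝ) < ε := lt_min (lt_min hεA hεB) (by norm_num)
      obtain ⟨n, hn⟩ := hsmall ε hεpos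
      set p := (f.toEquiv ^ n) x with hp
      set q := (f.toEquiv ^ n) y with hq
      have hpq : p ≠ q := fun h => hxy ((f.toEquiv ^ n).injective h).symm
      set d := dist p q with hd
      have hdpos : 0 < d := dist_pos.mpr hpq
      have hdε : d < ε := hn
      have hdq : d < 1/4 := lt_of_lt_of_le hdε (min_le_right _ _)
      -- lifts of p and q at distance exactly d
      obtain ⟨c, -, hc1⟩ := lift_Ico 0 p
      obtain ⟨e₀, -, he₀⟩ := lift_Ico 0 q
      have hdist : d = |(c - e₀) - round (c - e₀)| := by
        rw [hd, dist_eq_norm, ← hc1, ← he₀, ← AddCircle.coe_sub, AddCircle.norm_eq]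
        norm_num
      set e : ℝ := e₀ + round (c - e₀) with hedef
      have hecoe : (↑e : AddCircle (1:ℝ)) = q := by
        rw [← he₀]
        exact (coe_eq_coe'.mpr ⟨round (c - e₀), by rw [hedef]; push_cast; ring⟩).symm
      have heC : |e - c| = d := by
        rw [hdist, hedef, abs_sub_comm]
        congr 1
        push_cast
        ring
      have hcne : c ≠ e := by
        intro h
        rw [h] at heC
        simp at heC
        linarith
      set c' := min c e with hc'def
      set e' := max c e with he'def
      have hc'e' : c' < e' := min_lt_max.mpr hcne
      have hlen : e' - c' = d := by rw [he'def, hc'def, max_sub_min_eq_abs, heC]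
      have he'1 : e' < c' + 1 := by linarith
      have hpair : ((↑c' : AddCircle (1:ℝ)) = p ∧ (↑e' : AddCircle (1:ℝ)) = q) ∨
          ((↑c' : AddCircle (1:ℝ)) = q ∧ (↑e' : AddCircle (1:ℝ)) = p) := by
        rcases le_total c e with h | h
        · left; rw [hc'def, he'def, min_eq_left h, max_eq_right h]; exact ⟨hc1, hecoe⟩
        · right; rw [hc'def, he'def, min_eq_right h, max_eq_left h]; exact ⟨hecoe, hc1⟩
      -- images of the arcs
      set A1 := ⇑(f.toEquiv ^ n) '' A with hA1def
      set B1 := ⇑(f.toEquiv ^ n) '' B with hB1def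
      have hA1pre : IsPreconnected A1 := hApre.image _ (cont_zpow f n).continuousOn
      have hB1pre : IsPreconnected B1 := hBpre.image _ (cont_zpow f n).continuousOn
      have hpqmem : p ∈ A1 ∧ q ∈ A1 ∧ p ∈ B1 ∧ q ∈ B1 :=
        ⟨⟨x, hxA, rfl⟩, ⟨y, hyA, rfl⟩, ⟨x, hxB, rfl⟩, ⟨y, hyB, rfl⟩⟩
      have hinter : A1 ∩ B1 ⊆ {(↑c' : AddCircle (1:ℝ)), ↑e'} := by
        rw [hA1def, hB1def, ← Set.image_inter (f.toEquiv ^ n).injective]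
        rintro z ⟨w, hw, rfl⟩
        have hz : (f.toEquiv ^ n) w = p ∨ (f.toEquiv ^ n) w = q := by
          rcases hABsub hw with h | h
          · left; rw [h]
          · right; rw [mem_singleton_iff] at h; rw [h]
        rw [mem_insert_iff, mem_singleton_iff]
        rcases hz with h | h <;> rcases hpair with ⟨h1, h2⟩ | ⟨h1, h2⟩
        · exact Or.inl (h.trans h1.symm)
        · exact Or.inr (h.trans h2.symm)
        · exact Or.inr (h.trans h2.symm)
        · exact Or.inl (h.trans h1.symm)
      have hc'A1 : (↑c' : AddCircle (1:ℝ)) ∈ A1 := by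
        rcases hpair with ⟨h1, -⟩ | ⟨h1, -⟩
        · rw [h1]; exact hpqmem.1
        · rw [h1]; exact hpqmem.2.1
      have hc'B1 : (↑c' : AddCircle (1:ℝ)) ∈ B1 := by
        rcases hpair with ⟨h1, -⟩ | ⟨h1, -⟩
        · rw [h1]; exact hpqmem.2.2.1
        · rw [h1]; exact hpqmem.2.2.2
      have he'A1 : (↑e' : AddCircle (1:ℝ)) ∈ A1 := by
        rcases hpair with ⟨-, h2⟩ | ⟨-, h2⟩
        · rw [h2]; exact hpqmem.2.1
        · rw [h2]; exact hpqmem.1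
      have he'B1 : (↑e' : AddCircle (1:ℝ)) ∈ B1 := by
        rcases hpair with ⟨-, h2⟩ | ⟨-, h2⟩
        · rw [h2]; exact hpqmem.2.2.2
        · rw [h2]; exact hpqmem.2.2.1
      -- points of the short arc are pairwise d-close
      have harc : ∀ z ∈ ((↑) : ℝ → AddCircle (1:ℝ)) '' Icc c' e',
          ∀ w ∈ ((↑) : ℝ → AddCircle (1:ℝ)) '' Icc c' e', dist z w ≤ d := by
        rintro _ ⟨u, hu, rfl⟩ _ ⟨v, hv, rfl⟩
        have habs : |u - v| ≤ d := by
          rw [abs_sub_le_iff]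
          constructor <;> [skip; skip] <;>
            (first | (have := hu.1; have := hu.2; have := hv.1; have := hv.2; linarith))
        rw [dist_eq_norm, ← AddCircle.coe_sub, norm_coe_small (by linarith)]
        exact habs
      rcases dichotomy hc'e' he'1 hA1pre hB1pre hinter hc'A1 hc'B1 he'A1 he'B1 with h | h
      · obtain ⟨u, hu, v, hv, hgt⟩ := hnA n
        have h1 := harc _ (h ⟨u, hu, rfl⟩) _ (h ⟨v, hv, rfl⟩)
        have : ε ≤ εA := le_trans (min_le_left _ _) (min_le_left _ _)
        linarith
      · obtain ⟨u, hu, v, hv, hgt⟩ := hnB n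
        have h1 := harc _ (h ⟨u, hu, rfl⟩) _ (h ⟨v, hv, rfl⟩)
        have : ε ≤ εB := le_trans (min_le_left _ _) (min_le_right _ _)
        linarith
    rcases key with k | k
    · exact hfinal A hxA hintA k
    · exact hfinal B hxB hintB k
  · rintro rfl
    show (⨅ n : ℤ, dist ((f.toEquiv ^ n) y) ((f.toEquiv ^ n) y)) = 0
    simp [dist_self]
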